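/- Let S be a finite set of states and A a finite set of actions. Fix a deterministic transition function B : S × A → S, a cost function C : S × A → ℝ with 0 ≤ C(s,a) ≤ 1 for all s, a, an initial state s₀ ∈ S, and a time horizon T ≥ 1. A (stochastic) policy is a map π : S → PMF A, and a deterministic expert is a map a* : S → A (viewed as the policy assigning probability 1 to a*(s) in state s). For a policy π, define the state distribution d_π^t ∈ PMF S at step t (1 ≤ t ≤ T) recursively by d_π^1 = δ_{s₀} and d_π^{t+1}(s') = Σ_{s,a} d_π^t(s) · π(s)(a) · 1[B(s,a) = s'], and define the global cost J(π) = (1/T) Σ_{t=1}^T E_{s ∼ d_π^t}[ E_{a ∼ π(s)}[C(s,a)] ]. Suppose π̂ is a policy whose average expected 0-1 loss against the expert under the expert's own state distributions satisfies (1/T) Σ_{t=1}^T E_{s ∼ d_{π*}^t}[ 1 − π̂(s)(a*(s)) ] ≤ ε. Then J(π̂) ≤ J(π*) + T² · ε, where J(π*) is the global cost of the expert policy. -/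

import Mathlib

open scoped BigOperators

/-- The state distribution `d_π^{t+1}` (indexed from 0, so index `t` corresponds to
the paper's time step `t+1`) of a learner following stochastic policy `π` in the MDP
with deterministic transition function `B`, starting from initial state `s₀`:
`d_π^1 = δ_{s₀}` and `d_π^{t+1}(s') = Σ_{s,a} d_π^t(s) · π(s)(a) · 1[B(s,a) = s']`. -/
noncomputable def stateDist {S A : Type*} [Fintype S] [Fintype A] [DecidableEq S]
    (B : S → A → S) (π : S → PMF A) (s₀ : S) : ℕ → S → ℝ
  | 0, s => if s = s₀ then 1 else 0
  | (t + 1), s' =>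
      ∑ s : S, ∑ a : A,
        stateDist B π s₀ t s * (π s a).toReal * (if B s a = s' then 1 else 0)

/-- The global cost `J(π) = (1/T) Σ_{t=1}^T E_{s ∼ d_π^t}[ E_{a ∼ π(s)}[C(s,a)] ]`. -/
noncomputable def globalCost {S A : Type*} [Fintype S] [Fintype A] [DecidableEq S]
    (B : S → A → S) (C : S → A → ℝ) (π : S → PMF A) (s₀ : S) (T : ℕ) : ℝ :=
  (1 / T : ℝ) * ∑ t ∈ Finset.range T, ∑ s : S,
    stateDist B π s₀ t s * ∑ a : A, (π s a).toReal * C s a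

section Helpers

variable {S A : Type*} [Fintype S] [Fintype A] [DecidableEq S]

/-- The deterministic expert trajectory. -/
def straj (B : S → A → S) (astar : S → A) (s₀ : S) : ℕ → S
  | 0 => s₀
  | (t+1) => B (straj B astar s₀ t) (astar (straj B astar s₀ t))

lemma pmf_toReal_nonneg (p : PMF A) (a : A) : (0:ℝ) ≤ (p a).toReal :=
  ENNReal.toReal_nonneg

lemma pmf_toReal_le_one (p : PMF A) (a : A) : (p a).toReal ≤ 1 := by
  have h := PMF.coe_le_one p a
  have := ENNReal.toReal_mono ENNReal.one_ne_top h
  simpa using this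

lemma pmf_sum_toReal (p : PMF A) : ∑ a : A, (p a).toReal = 1 := by
  have h := p.tsum_coe
  rw [tsum_fintype] at h
  rw [← ENNReal.toReal_sum (fun a _ => p.apply_ne_top a), h, ENNReal.toReal_one]

lemma stateDist_nonneg (B : S → A → S) (π : S → PMF A) (s₀ : S) :
    ∀ t s, 0 ≤ stateDist B π s₀ t s
  | 0, s => by rw [stateDist]; split <;> norm_num
  | (t+1), s' => by
    rw [stateDist]
    refine Finset.sum_nonneg fun s _ => Finset.sum_nonneg fun a _ => ?_
    have h1 := stateDist_nonneg B π s₀ t s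
    have h2 : (0:ℝ) ≤ (π s a).toReal := ENNReal.toReal_nonneg
    have h3 : (0:ℝ) ≤ (if B s a = s' then (1:ℝ) else 0) := by split <;> norm_num
    positivity

lemma stateDist_sum (B : S → A → S) (π : S → PMF A) (s₀ : S) :
    ∀ t, ∑ s : S, stateDist B π s₀ t s = 1
  | 0 => by simp [stateDist]
  | (t+1) => by
    have ih := stateDist_sum B π s₀ t
    simp only [stateDist]
    rw [Finset.sum_comm]
    have key : ∀ s : S, ∑ s' : S, ∑ a : A,
        stateDist B π s₀ t s * (π s a).toReal * (if B s a = s' then 1 else 0)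
        = stateDist B π s₀ t s := by
      intro s
      rw [Finset.sum_comm]
      have h1 : ∀ a : A, ∑ s' : S,
          stateDist B π s₀ t s * (π s a).toReal * (if B s a = s' then 1 else 0)
          = stateDist B π s₀ t s * (π s a).toReal := by
        intro a
        rw [← Finset.mul_sum]
        simp [Finset.sum_ite_eq]
      rw [Finset.sum_congr rfl fun a _ => h1 a, ← Finset.mul_sum, pmf_sum_toReal,
        mul_one]
    rw [Finset.sum_congr rfl fun s _ => key s, ih]

lemma stateDist_pure (B : S → A → S) (astar : S → A) (s₀ : S) :
    ∀ t s, stateDist B (fun s => PMF.pure (astar s)) s₀ t s =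
      if s = straj B astar s₀ t then 1 else 0
  | 0, s => by rw [stateDist]; rfl
  | (t+1), s' => by
    have ih := stateDist_pure B astar s₀ t
    rw [stateDist]
    simp only [ih, PMF.pure_apply]
    rw [Finset.sum_eq_single (straj B astar s₀ t)]
    · rw [Finset.sum_eq_single (astar (straj B astar s₀ t))]
      · simp [straj, eq_comm]; congr
      · intro a _ ha
        simp [ha]
      · intro h; exact absurd (Finset.mem_univ _) h
    · intro s _ hs
      simp [hs]
    · intro h; exact absurd (Finset.mem_univ _) h

lemma coupling (B : S → A → S) (astar : S → A) (πhat : S → PMF A) (s₀ : S) :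
    ∀ t, 1 - (∑ u ∈ Finset.range t,
        (1 - (πhat (straj B astar s₀ u) (astar (straj B astar s₀ u))).toReal))
      ≤ stateDist B πhat s₀ t (straj B astar s₀ t)
  | 0 => by simp [stateDist, straj]
  | (t+1) => by
    have ih := coupling B astar πhat s₀ t
    set st := straj B astar s₀ with hst
    have hq0 : (0:ℝ) ≤ (πhat (st t) (astar (st t))).toReal := ENNReal.toReal_nonneg
    have hq1 : (πhat (st t) (astar (st t))).toReal ≤ 1 := pmf_toReal_le_one _ _
    have hE0 : (0:ℝ) ≤ ∑ u ∈ Finset.range t,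
        (1 - (πhat (st u) (astar (st u))).toReal) :=
      Finset.sum_nonneg fun u _ => by
        have := pmf_toReal_le_one (πhat (st u)) (astar (st u)); linarith
    have hterm : stateDist B πhat s₀ t (st t) * (πhat (st t) (astar (st t))).toReal
        ≤ stateDist B πhat s₀ (t+1) (st (t+1)) := by
      rw [stateDist]
      have h1 : ∀ s : S, (0:ℝ) ≤ ∑ a : A,
          stateDist B πhat s₀ t s * (πhat s a).toReal *
            (if B s a = st (t+1) then 1 else 0) := by
        intro s
        refine Finset.sum_nonneg fun a _ => ?_
        have := stateDist_nonneg B πhat s₀ t s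
        have h2 : (0:ℝ) ≤ (πhat s a).toReal := ENNReal.toReal_nonneg
        have h3 : (0:ℝ) ≤ (if B s a = st (t+1) then (1:ℝ) else 0) := by
          split <;> norm_num
        positivity
      have h4 : stateDist B πhat s₀ t (st t) * (πhat (st t) (astar (st t))).toReal
          ≤ ∑ a : A, stateDist B πhat s₀ t (st t) * (πhat (st t) a).toReal *
              (if B (st t) a = st (t+1) then 1 else 0) := by
        have hBa : B (st t) (astar (st t)) = st (t+1) := rfl
        have := Finset.single_le_sum (f := fun a : A =>
            stateDist B πhat s₀ t (st t) * (πhat (st t) a).toReal *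
              (if B (st t) a = st (t+1) then 1 else 0))
          (fun a _ => by
            have := stateDist_nonneg B πhat s₀ t (st t)
            have h2 : (0:ℝ) ≤ (πhat (st t) a).toReal := ENNReal.toReal_nonneg
            have h3 : (0:ℝ) ≤ (if B (st t) a = st (t+1) then (1:ℝ) else 0) := by
              split <;> norm_num
            positivity)
          (Finset.mem_univ (astar (st t)))
        simpa [hBa] using this
      calc stateDist B πhat s₀ t (st t) * (πhat (st t) (astar (st t))).toReal
          ≤ ∑ a : A, stateDist B πhat s₀ t (st t) * (πhat (st t) a).toReal *
              (if B (st t) a = st (t+1) then 1 else 0) := h4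
        _ ≤ ∑ s : S, ∑ a : A, stateDist B πhat s₀ t s * (πhat s a).toReal *
              (if B s a = st (t+1) then 1 else 0) :=
            Finset.single_le_sum (f := fun s : S => ∑ a : A,
              stateDist B πhat s₀ t s * (πhat s a).toReal *
                (if B s a = st (t+1) then 1 else 0))
              (fun s _ => h1 s) (Finset.mem_univ (st t))
    rw [Finset.sum_range_succ]
    have hd := ih
    nlinarith [hterm, mul_le_mul_of_nonneg_right hd hq0]

end Helpers

/-- **Behavioral cloning regret bound** (Ross–Bagnell): if the learner `π̂`'s
time-averaged expected 0-1 loss against a deterministic expert `a*`, measured under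
the expert's own state distributions, is at most `ε`, then the learner's global cost
exceeds the expert's by at most `T² ε`. -/
theorem behavioral_cloning_regret
    {S A : Type*} [Fintype S] [Fintype A] [DecidableEq S] [Nonempty S] [Nonempty A]
    (B : S → A → S) (C : S → A → ℝ)
    (hC0 : ∀ s a, 0 ≤ C s a) (hC1 : ∀ s a, C s a ≤ 1)
    (s₀ : S) (T : ℕ) (hT : 1 ≤ T)
    (astar : S → A) (πhat : S → PMF A) (ε : ℝ)
    (hloss :
      (1 / T : ℝ) * ∑ t ∈ Finset.range T, ∑ s : S,
          stateDist B (fun s => PMF.pure (astar s)) s₀ t s *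
            (1 - (πhat s (astar s)).toReal) ≤ ε) :
    globalCost B C πhat s₀ T ≤
      globalCost B C (fun s => PMF.pure (astar s)) s₀ T + (T : ℝ) ^ 2 * ε := by
  classical
  set st : ℕ → S := straj B astar s₀ with hst
  set e : ℕ → ℝ := fun t => 1 - (πhat (st t) (astar (st t))).toReal with he
  have he0 : ∀ t, 0 ≤ e t := fun t => by
    have := pmf_toReal_le_one (πhat (st t)) (astar (st t)); simp [he]; linarith
  have hTpos : (0:ℝ) < T := by exact_mod_cast Nat.lt_of_lt_of_le Nat.zero_lt_one hT
  -- Rewrite the loss hypothesis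
  have hloss' : ∑ t ∈ Finset.range T, e t ≤ T * ε := by
    have hrw : ∀ t, ∑ s : S,
        stateDist B (fun s => PMF.pure (astar s)) s₀ t s *
          (1 - (πhat s (astar s)).toReal) = e t := by
      intro t
      simp only [stateDist_pure B astar s₀ t, ite_mul, one_mul, zero_mul]
      rw [Finset.sum_ite_eq' Finset.univ (st t)
        (fun s => 1 - (πhat s (astar s)).toReal)]
      simp [he]
    rw [Finset.sum_congr rfl fun t _ => hrw t] at hloss
    have := mul_le_mul_of_nonneg_left hloss hTpos.le
    rw [← mul_assoc, mul_one_div, div_self hTpos.ne', one_mul] at this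
    linarith
  have hsum_e0 : 0 ≤ ∑ t ∈ Finset.range T, e t :=
    Finset.sum_nonneg fun t _ => he0 t
  have hε0 : 0 ≤ ε := by
    by_contra h
    push_neg at h
    have : T * ε < 0 := mul_neg_of_pos_of_neg hTpos h
    linarith
  -- per-step bound
  have hstep : ∀ t < T,
      (∑ s : S, stateDist B πhat s₀ t s * ∑ a : A, (πhat s a).toReal * C s a)
      ≤ C (st t) (astar (st t)) + T * ε := by
    intro t ht
    set d : S → ℝ := stateDist B πhat s₀ t with hd
    have hd0 : ∀ s, 0 ≤ d s := fun s => stateDist_nonneg B πhat s₀ t s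
    have hdsum : ∑ s : S, d s = 1 := stateDist_sum B πhat s₀ t
    set c : S → ℝ := fun s => ∑ a : A, (πhat s a).toReal * C s a with hc
    have hc0 : ∀ s, 0 ≤ c s := fun s =>
      Finset.sum_nonneg fun a _ =>
        mul_nonneg ENNReal.toReal_nonneg (hC0 s a)
    have hc1 : ∀ s, c s ≤ 1 := by
      intro s
      calc c s ≤ ∑ a : A, (πhat s a).toReal :=
            Finset.sum_le_sum fun a _ =>
              mul_le_of_le_one_right ENNReal.toReal_nonneg (hC1 s a)
        _ = 1 := pmf_sum_toReal _
    -- c (st t) ≤ C (st t) (astar (st t)) + e t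
    have hcst : c (st t) ≤ C (st t) (astar (st t)) + e t := by
      have hsplit := Finset.add_sum_erase Finset.univ
        (fun a => (πhat (st t) a).toReal * C (st t) a)
        (Finset.mem_univ (astar (st t)))
      have h1 : (πhat (st t) (astar (st t))).toReal * C (st t) (astar (st t))
          ≤ C (st t) (astar (st t)) :=
        mul_le_of_le_one_left (hC0 _ _) (pmf_toReal_le_one _ _)
      have h2 : ∑ a ∈ Finset.univ.erase (astar (st t)),
          (πhat (st t) a).toReal * C (st t) a
          ≤ ∑ a ∈ Finset.univ.erase (astar (st t)), (πhat (st t) a).toReal :=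
        Finset.sum_le_sum fun a _ =>
          mul_le_of_le_one_right ENNReal.toReal_nonneg (hC1 _ _)
      have h3 : ∑ a ∈ Finset.univ.erase (astar (st t)), (πhat (st t) a).toReal
          = 1 - (πhat (st t) (astar (st t))).toReal := by
        have := Finset.add_sum_erase Finset.univ
          (fun a => (πhat (st t) a).toReal) (Finset.mem_univ (astar (st t)))
        rw [pmf_sum_toReal] at this
        linarith
      have : c (st t) = (πhat (st t) (astar (st t))).toReal * C (st t) (astar (st t))
          + ∑ a ∈ Finset.univ.erase (astar (st t)),
              (πhat (st t) a).toReal * C (st t) a := by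
        rw [hc]; exact hsplit.symm
      have het : e t = 1 - (πhat (st t) (astar (st t))).toReal := rfl
      rw [this]
      linarith [h2.trans_eq h3, het]
    -- split the state sum
    have hsplitS := Finset.add_sum_erase Finset.univ (fun s => d s * c s)
      (Finset.mem_univ (st t))
    have hS2 : ∑ s ∈ Finset.univ.erase (st t), d s * c s
        ≤ ∑ s ∈ Finset.univ.erase (st t), d s :=
      Finset.sum_le_sum fun s _ => mul_le_of_le_one_right (hd0 s) (hc1 s)
    have hS3 : ∑ s ∈ Finset.univ.erase (st t), d s = 1 - d (st t) := by
      have := Finset.add_sum_erase Finset.univ d (Finset.mem_univ (st t))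
      rw [hdsum] at this; linarith
    have hcoup : 1 - ∑ u ∈ Finset.range t, e u ≤ d (st t) := coupling B astar πhat s₀ t
    have hdst1 : d (st t) ≤ 1 := by
      have := Finset.single_le_sum (f := d) (fun s _ => hd0 s) (Finset.mem_univ (st t))
      linarith [hdsum ▸ this]
    have hpart : ∑ u ∈ Finset.range t, e u + e t ≤ ∑ u ∈ Finset.range T, e u := by
      rw [← Finset.sum_range_succ]
      exact Finset.sum_le_sum_of_subset_of_nonneg
        (Finset.range_subset_range.2 ht) (fun u _ _ => he0 u)
    have hdc : d (st t) * c (st t) ≤ c (st t) :=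
      mul_le_of_le_one_left (hc0 _) hdst1
    have hEbound : ∑ u ∈ Finset.range t, e u + e t ≤ T * ε := le_trans hpart hloss'
    have hEt0 : 0 ≤ ∑ u ∈ Finset.range t, e u :=
      Finset.sum_nonneg fun u _ => he0 u
    calc ∑ s : S, d s * c s
        = d (st t) * c (st t) + ∑ s ∈ Finset.univ.erase (st t), d s * c s :=
          hsplitS.symm
      _ ≤ c (st t) + (1 - d (st t)) := by
          have := hS2.trans_eq hS3; linarith
      _ ≤ C (st t) (astar (st t)) + e t + ∑ u ∈ Finset.range t, e u := by
          linarith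
      _ ≤ C (st t) (astar (st t)) + T * ε := by linarith
  -- expert per-step cost
  have hexpert : ∀ t, ∑ s : S,
      stateDist B (fun s => PMF.pure (astar s)) s₀ t s *
        ∑ a : A, ((PMF.pure (astar s) : PMF A) a).toReal * C s a
      = C (st t) (astar (st t)) := by
    intro t
    simp only [stateDist_pure B astar s₀ t, ite_mul, one_mul, zero_mul]
    rw [Finset.sum_ite_eq' Finset.univ (st t)
      (fun s => ∑ a : A, ((PMF.pure (astar s) : PMF A) a).toReal * C s a)]
    simp only [Finset.mem_univ, if_true, PMF.pure_apply]
    rw [Finset.sum_eq_single (astar (st t))]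
    · simp
    · intro a _ ha; simp [ha]
    · intro h; exact absurd (Finset.mem_univ _) h
  -- assemble
  unfold globalCost
  have hsumbound : ∑ t ∈ Finset.range T, ∑ s : S,
      stateDist B πhat s₀ t s * ∑ a : A, (πhat s a).toReal * C s a
      ≤ (∑ t ∈ Finset.range T, ∑ s : S,
          stateDist B (fun s => PMF.pure (astar s)) s₀ t s *
            ∑ a : A, ((PMF.pure (astar s) : PMF A) a).toReal * C s a)
        + T * (T * ε) := by
    have : ∀ t ∈ Finset.range T,
        ∑ s : S, stateDist B πhat s₀ t s * ∑ a : A, (πhat s a).toReal * C s a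
        ≤ (∑ s : S, stateDist B (fun s => PMF.pure (astar s)) s₀ t s *
            ∑ a : A, ((PMF.pure (astar s) : PMF A) a).toReal * C s a) + T * ε := by
      intro t ht
      rw [hexpert t]
      exact hstep t (Finset.mem_range.1 ht)
    calc ∑ t ∈ Finset.range T, ∑ s : S,
        stateDist B πhat s₀ t s * ∑ a : A, (πhat s a).toReal * C s a
        ≤ ∑ t ∈ Finset.range T,
            ((∑ s : S, stateDist B (fun s => PMF.pure (astar s)) s₀ t s *
              ∑ a : A, ((PMF.pure (astar s) : PMF A) a).toReal * C s a) + T * ε) :=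
          Finset.sum_le_sum this
      _ = (∑ t ∈ Finset.range T, ∑ s : S,
            stateDist B (fun s => PMF.pure (astar s)) s₀ t s *
              ∑ a : A, ((PMF.pure (astar s) : PMF A) a).toReal * C s a)
          + T * (T * ε) := by
          rw [Finset.sum_add_distrib, Finset.sum_const, Finset.card_range]
          ring
  have hmul := mul_le_mul_of_nonneg_left hsumbound
    (by positivity : (0:ℝ) ≤ 1 / T)
  have hTe : (1 / T : ℝ) * (T * (T * ε)) = T * ε := by
    field_simp
  have hTle : (T:ℝ) * ε ≤ (T:ℝ)^2 * ε := by
    have hT1 : (1:ℝ) ≤ (T:ℝ) := by exact_mod_cast hT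
    have h1 : (T:ℝ) ≤ (T:ℝ)^2 := by nlinarith
    exact mul_le_mul_of_nonneg_right h1 hε0
  rw [mul_add, hTe] at hmul
  linarith
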